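/- Let C := sup{ α·H̃(γ₁, 1) + (1−α)·H̃(γ₂, 1/2) : α ∈ [0,1], γ₁, γ₂ ∈ [0, 1/2], α·(γ₁ + 1) + (1−α)·(γ₂ + 1/2) = 1 }. Then 0.811 ≤ C ≤ 0.812. (The paper reports the value C = 0.8114 bits per time slot, attained near α = 0.177, γ₁ = 0.43, γ₂ = 0.407; this is the capacity of the covert queueing channel in a shared FCFS scheduler with service rate 1 serving two users.) -/

import Mathlib

/-- Shannon entropy (in bits) of a pmf on `{0,1,…,k}`, with the convention
`0 · log₂ 0 = 0` (automatic since `Real.logb 2 0 = 0`). -/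
noncomputable def shannonEntropy (k : ℕ) (p : ℕ → ℝ) : ℝ :=
  -∑ i ∈ Finset.range (k + 1), p i * Real.logb 2 (p i)

/-- `H̃(γ, 1/k)`: `(1/k)` times the supremum of the entropies of pmfs on `{0,…,k}`
with mean `kγ`. -/
noncomputable def Htilde (k : ℕ) (γ : ℝ) : ℝ :=
  (1 / (k : ℝ)) * sSup { h : ℝ | ∃ p : ℕ → ℝ,
    (∀ i ∈ Finset.range (k + 1), 0 ≤ p i) ∧
    (∑ i ∈ Finset.range (k + 1), p i = 1) ∧
    (∑ i ∈ Finset.range (k + 1), (i : ℝ) * p i = (k : ℝ) * γ) ∧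
    h = shannonEntropy k p }

/-- The capacity of the covert queueing channel in a shared FCFS scheduler with
service rate 1 serving two users:
`C = sup { α·H̃(γ₁,1) + (1−α)·H̃(γ₂,1/2) }` over `α ∈ [0,1]`, `γ₁,γ₂ ∈ [0,1/2]`
with `α(γ₁+1) + (1−α)(γ₂+1/2) = 1`. -/
noncomputable def twoUserCapacity : ℝ :=
  sSup { c : ℝ | ∃ α γ₁ γ₂ : ℝ,
    α ∈ Set.Icc (0 : ℝ) 1 ∧
    γ₁ ∈ Set.Icc (0 : ℝ) (1 / 2) ∧
    γ₂ ∈ Set.Icc (0 : ℝ) (1 / 2) ∧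
    α * (γ₁ + 1) + (1 - α) * (γ₂ + 1 / 2) = 1 ∧
    c = α * Htilde 1 γ₁ + (1 - α) * Htilde 2 γ₂ }

/-! ### Auxiliary lemmas -/

/-- Lower bound on `logb 2 (a/b)` from an integer power inequality. -/
lemma lg_ge_of_pow (a b m n : ℕ) (hb : 0 < b) (hn : 0 < n)
    (h : 2 ^ m * b ^ n ≤ a ^ n) : (m : ℝ) / n ≤ Real.logb 2 ((a : ℝ) / b) := by
  have ha : 0 < a := by
    rcases Nat.eq_zero_or_pos a with h0 | h0
    · exfalso
      rw [h0, Nat.zero_pow hn] at h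
      have hpos : 0 < 2 ^ m * b ^ n := Nat.mul_pos (pow_pos (by norm_num) m) (pow_pos hb n)
      omega
    · exact h0
  have key : ((2:ℝ)) ^ m ≤ ((a:ℝ) / b) ^ n := by
    rw [div_pow, le_div_iff₀ (by positivity)]
    exact_mod_cast h
  have h2 : Real.logb 2 ((2:ℝ) ^ m) ≤ Real.logb 2 (((a:ℝ) / b) ^ n) :=
    Real.logb_le_logb_of_le one_lt_two (by positivity) key
  rw [Real.logb_pow, Real.logb_pow] at h2
  have h3 : Real.logb 2 2 = 1 := by simp
  rw [h3, mul_one] at h2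
  rw [div_le_iff₀ (by positivity : (0:ℝ) < (n:ℕ))]
  linarith [h2, mul_comm (Real.logb 2 ((a:ℝ)/b)) (n:ℝ)]

/-- Upper bound on `logb 2 (a/b)` from an integer power inequality. -/
lemma lg_le_of_pow (a b m n : ℕ) (ha : 0 < a) (hb : 0 < b) (hn : 0 < n)
    (h : a ^ n ≤ 2 ^ m * b ^ n) : Real.logb 2 ((a : ℝ) / b) ≤ (m : ℝ) / n := by
  have key : ((a:ℝ) / b) ^ n ≤ ((2:ℝ)) ^ m := by
    rw [div_pow, div_le_iff₀ (by positivity)]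
    exact_mod_cast h
  have h2 : Real.logb 2 (((a:ℝ) / b) ^ n) ≤ Real.logb 2 ((2:ℝ) ^ m) :=
    Real.logb_le_logb_of_le one_lt_two (by positivity) key
  rw [Real.logb_pow, Real.logb_pow] at h2
  have h3 : Real.logb 2 2 = 1 := by simp
  rw [h3, mul_one] at h2
  rw [le_div_iff₀ (by positivity : (0:ℝ) < (n:ℕ))]
  linarith [mul_comm (Real.logb 2 ((a:ℝ)/b)) (n:ℝ)]

/-- Gibbs' inequality: the entropy of a pmf `p` is at most
`logb 2 (∑ w) - ∑ p i * logb 2 (w i)` for any positive weights `w`. -/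
lemma gibbs (k : ℕ) (p w : ℕ → ℝ) (hp : ∀ i ∈ Finset.range (k+1), 0 ≤ p i)
    (hw : ∀ i ∈ Finset.range (k+1), 0 < w i)
    (h1 : ∑ i ∈ Finset.range (k+1), p i = 1) :
    shannonEntropy k p ≤ Real.logb 2 (∑ i ∈ Finset.range (k+1), w i)
      - ∑ i ∈ Finset.range (k+1), p i * Real.logb 2 (w i) := by
  set Z := ∑ i ∈ Finset.range (k+1), w i with hZ
  have hZpos : 0 < Z := Finset.sum_pos hw ⟨0, by simp⟩
  have key : ∀ i ∈ Finset.range (k+1),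
      p i * Real.logb 2 (w i) - p i * Real.logb 2 (p i) - p i * Real.logb 2 Z
        ≤ (w i / Z - p i) / Real.log 2 := by
    intro i hi
    have hwi := hw i hi
    rcases eq_or_lt_of_le (hp i hi) with h0 | h0
    · rw [← h0]
      simp
      positivity
    · have e1 : p i * Real.logb 2 (w i) - p i * Real.logb 2 (p i) - p i * Real.logb 2 Z
          = p i * Real.log (w i / (Z * p i)) / Real.log 2 := by
        rw [Real.logb, Real.logb, Real.logb,
          Real.log_div (by positivity) (by positivity),
          Real.log_mul (by positivity) (by positivity)]
        ring
      rw [e1]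
      have hlog : Real.log (w i / (Z * p i)) ≤ w i / (Z * p i) - 1 :=
        Real.log_le_sub_one_of_pos (by positivity)
      have hlog2 : 0 < Real.log 2 := Real.log_pos one_lt_two
      rw [div_le_div_iff_of_pos_right hlog2]
      have h2 : p i * Real.log (w i / (Z * p i)) ≤ p i * (w i / (Z * p i) - 1) :=
        mul_le_mul_of_nonneg_left hlog h0.le
      have h3 : p i * (w i / (Z * p i) - 1) = w i / Z - p i := by
        field_simp
      linarith
  have sum_le := Finset.sum_le_sum key
  have hr : ∑ i ∈ Finset.range (k+1), (w i / Z - p i) / Real.log 2 = 0 := by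
    rw [← Finset.sum_div]
    have h4 : ∑ i ∈ Finset.range (k+1), (w i / Z - p i) = 0 := by
      rw [Finset.sum_sub_distrib, ← Finset.sum_div, h1, ← hZ]
      field_simp
      norm_num
    rw [h4, zero_div]
  have hl : ∑ i ∈ Finset.range (k+1),
      (p i * Real.logb 2 (w i) - p i * Real.logb 2 (p i) - p i * Real.logb 2 Z)
      = ∑ i ∈ Finset.range (k+1), p i * Real.logb 2 (w i)
        - ∑ i ∈ Finset.range (k+1), p i * Real.logb 2 (p i) - Real.logb 2 Z := by
    rw [Finset.sum_sub_distrib, Finset.sum_sub_distrib, ← Finset.sum_mul, h1, one_mul]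
  rw [hl, hr] at sum_le
  unfold shannonEntropy
  linarith

/-- Gibbs bound specialised to geometric weights `x^i`. -/
lemma entropy_le_tilt (k : ℕ) (p : ℕ → ℝ) (x : ℝ) (hx0 : 0 < x)
    (hp : ∀ i ∈ Finset.range (k+1), 0 ≤ p i)
    (h1 : ∑ i ∈ Finset.range (k+1), p i = 1) :
    shannonEntropy k p ≤ Real.logb 2 (∑ i ∈ Finset.range (k+1), x ^ i)
      - Real.logb 2 x * ∑ i ∈ Finset.range (k+1), (i : ℝ) * p i := by
  have h := gibbs k p (fun i => x ^ i) hp (fun i _ => pow_pos hx0 i) h1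
  have e : ∑ i ∈ Finset.range (k+1), p i * Real.logb 2 (x ^ i)
      = Real.logb 2 x * ∑ i ∈ Finset.range (k+1), (i : ℝ) * p i := by
    rw [Finset.mul_sum]
    refine Finset.sum_congr rfl fun i _ => ?_
    rw [Real.logb_pow]
    ring
  rw [e] at h
  exact h

lemma sSup_Htilde_le (k : ℕ) (γ : ℝ) (hγ : 0 ≤ γ) (x : ℝ) (hx0 : 0 < x) (hx1 : x ≤ 1) :
    sSup { h : ℝ | ∃ p : ℕ → ℝ,
      (∀ i ∈ Finset.range (k + 1), 0 ≤ p i) ∧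
      (∑ i ∈ Finset.range (k + 1), p i = 1) ∧
      (∑ i ∈ Finset.range (k + 1), (i : ℝ) * p i = (k : ℝ) * γ) ∧
      h = shannonEntropy k p }
    ≤ Real.logb 2 (∑ i ∈ Finset.range (k+1), x ^ i) - Real.logb 2 x * ((k : ℝ) * γ) := by
  have hsum1 : (1:ℝ) ≤ ∑ i ∈ Finset.range (k+1), x ^ i := by
    have h0 : x ^ 0 ≤ ∑ i ∈ Finset.range (k+1), x ^ i :=
      Finset.single_le_sum (f := fun i => x ^ i)
        (fun i _ => (pow_pos hx0 i).le) (Finset.mem_range.mpr (Nat.succ_pos k))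
    rwa [pow_zero] at h0
  have hb : 0 ≤ Real.logb 2 (∑ i ∈ Finset.range (k+1), x ^ i)
      - Real.logb 2 x * ((k : ℝ) * γ) := by
    have h2 : Real.logb 2 x ≤ 0 := Real.logb_nonpos one_lt_two hx0.le hx1
    have h3 : 0 ≤ Real.logb 2 (∑ i ∈ Finset.range (k+1), x ^ i) :=
      Real.logb_nonneg one_lt_two hsum1
    nlinarith [mul_nonneg (Nat.cast_nonneg (α := ℝ) k) hγ]
  apply Real.sSup_le _ hb
  rintro h ⟨p, hp, hs, hm, rfl⟩
  have := entropy_le_tilt k p x hx0 hp hs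
  rw [hm] at this
  exact this

lemma bddAbove_Htilde (k : ℕ) (γ : ℝ) :
    BddAbove { h : ℝ | ∃ p : ℕ → ℝ,
      (∀ i ∈ Finset.range (k + 1), 0 ≤ p i) ∧
      (∑ i ∈ Finset.range (k + 1), p i = 1) ∧
      (∑ i ∈ Finset.range (k + 1), (i : ℝ) * p i = (k : ℝ) * γ) ∧
      h = shannonEntropy k p } := by
  refine ⟨Real.logb 2 (k+1), ?_⟩
  rintro h ⟨p, hp, hs, _, rfl⟩
  have := gibbs k p (fun _ => 1) hp (fun i _ => one_pos) hs
  simpa using this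

/-! ### Numeric log bounds -/

lemma L1_le : Real.logb 2 ((351:ℝ)/200) ≤ 203/250 := by
  have h := lg_le_of_pow 351 200 203 250 (by norm_num) (by norm_num) (by norm_num) (by norm_num)
  norm_num at h
  convert h using 2 <;> norm_num

lemma L1_ge : (811:ℝ)/1000 ≤ Real.logb 2 ((351:ℝ)/200) := by
  have h := lg_ge_of_pow 351 200 811 1000 (by norm_num) (by norm_num) (by decide +kernel)
  norm_num at h
  convert h using 2 <;> norm_num

lemma L2_le : Real.logb 2 ((93001:ℝ)/30200) ≤ 203/125 := by
  have h := lg_le_of_pow 93001 30200 203 125 (by norm_num) (by norm_num) (by norm_num) (by norm_num)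
  norm_num at h
  convert h using 2 <;> norm_num

lemma L2_ge : (811:ℝ)/500 ≤ Real.logb 2 ((93001:ℝ)/30200) := by
  have h := lg_ge_of_pow 93001 30200 811 500 (by norm_num) (by norm_num) (by decide +kernel)
  norm_num at h
  convert h using 2 <;> norm_num

lemma ML_eq : Real.logb 2 ((93001:ℝ)/40000) + Real.logb 2 ((200:ℝ)/151)
    = Real.logb 2 ((93001:ℝ)/30200) := by
  rw [← Real.logb_mul (by norm_num) (by norm_num)]
  norm_num

/-! ### Bounds on Htilde -/

lemma htilde_one_le (γ : ℝ) (hγ : 0 ≤ γ) :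
    Htilde 1 γ ≤ Real.logb 2 ((351:ℝ)/200) + Real.logb 2 ((200:ℝ)/151) * γ := by
  have h := sSup_Htilde_le 1 γ hγ (151/200) (by norm_num) (by norm_num)
  have hsum : ∑ i ∈ Finset.range (1+1), ((151:ℝ)/200) ^ i = 351/200 := by
    simp [Finset.sum_range_succ]
    norm_num
  have hinv : Real.logb 2 ((151:ℝ)/200) = -Real.logb 2 ((200:ℝ)/151) := by
    rw [show ((151:ℝ)/200) = ((200:ℝ)/151)⁻¹ by norm_num, Real.logb_inv]
  rw [hsum, hinv] at h
  unfold Htilde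
  calc (1/((1:ℕ):ℝ)) * sSup _ = sSup _ := by norm_num
  _ ≤ _ := h.trans (by push_cast; ring_nf; exact le_refl _)

lemma htilde_two_le (γ : ℝ) (hγ : 0 ≤ γ) :
    Htilde 2 γ ≤ (Real.logb 2 ((93001:ℝ)/40000)
      + Real.logb 2 ((200:ℝ)/151) * (2*γ)) / 2 := by
  have h := sSup_Htilde_le 2 γ hγ (151/200) (by norm_num) (by norm_num)
  have hsum : ∑ i ∈ Finset.range (2+1), ((151:ℝ)/200) ^ i = 93001/40000 := by
    simp [Finset.sum_range_succ]
    norm_num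
  have hinv : Real.logb 2 ((151:ℝ)/200) = -Real.logb 2 ((200:ℝ)/151) := by
    rw [show ((151:ℝ)/200) = ((200:ℝ)/151)⁻¹ by norm_num, Real.logb_inv]
  rw [hsum, hinv] at h
  unfold Htilde
  have h2 : sSup { h : ℝ | ∃ p : ℕ → ℝ,
      (∀ i ∈ Finset.range (2 + 1), 0 ≤ p i) ∧
      (∑ i ∈ Finset.range (2 + 1), p i = 1) ∧
      (∑ i ∈ Finset.range (2 + 1), (i : ℝ) * p i = ((2:ℕ) : ℝ) * γ) ∧
      h = shannonEntropy 2 p }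
      ≤ Real.logb 2 ((93001:ℝ)/40000) + Real.logb 2 ((200:ℝ)/151) * (2*γ) := by
    refine h.trans ?_
    push_cast
    ring_nf
    exact le_refl _
  have hcoef : (1/((2:ℕ):ℝ)) = (1:ℝ)/2 := by norm_num
  rw [hcoef]
  linarith

/-! ### Per-element upper bound for the capacity set -/

lemma cap_elem_le : ∀ c ∈ { c : ℝ | ∃ α γ₁ γ₂ : ℝ,
    α ∈ Set.Icc (0 : ℝ) 1 ∧
    γ₁ ∈ Set.Icc (0 : ℝ) (1 / 2) ∧
    γ₂ ∈ Set.Icc (0 : ℝ) (1 / 2) ∧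
    α * (γ₁ + 1) + (1 - α) * (γ₂ + 1 / 2) = 1 ∧
    c = α * Htilde 1 γ₁ + (1 - α) * Htilde 2 γ₂ }, c ≤ 0.812 := by
  rintro c ⟨α, γ₁, γ₂, ⟨hα0, hα1⟩, ⟨hγ₁0, _⟩, ⟨hγ₂0, _⟩, hcon, rfl⟩
  set L1 := Real.logb 2 ((351:ℝ)/200) with hL1
  set M := Real.logb 2 ((93001:ℝ)/40000) with hM
  set lam := Real.logb 2 ((200:ℝ)/151) with hlam
  set L2 := Real.logb 2 ((93001:ℝ)/30200) with hL2
  have h1 : Htilde 1 γ₁ ≤ L1 + lam * γ₁ := htilde_one_le γ₁ hγ₁0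
  have h2 : Htilde 2 γ₂ ≤ (M + lam * (2*γ₂)) / 2 := htilde_two_le γ₂ hγ₂0
  have hA : α * Htilde 1 γ₁ ≤ α * (L1 + lam * γ₁) :=
    mul_le_mul_of_nonneg_left h1 hα0
  have hB : (1-α) * Htilde 2 γ₂ ≤ (1-α) * ((M + lam * (2*γ₂)) / 2) :=
    mul_le_mul_of_nonneg_left h2 (by linarith)
  have hkey : α * γ₁ + (1-α) * γ₂ = (1-α)/2 := by linear_combination hcon
  have hML : M + lam = L2 := ML_eq
  have halg : α * (L1 + lam * γ₁) + (1-α) * ((M + lam * (2*γ₂)) / 2)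
      = α * L1 + (1-α) * (L2/2) := by
    linear_combination lam * hkey + ((1-α)/2) * hML
  have hL1u : L1 ≤ 203/250 := L1_le
  have hL2u : L2 ≤ 203/125 := L2_le
  have hfin : α * L1 + (1-α) * (L2/2) ≤ 203/250 := by
    nlinarith [mul_le_mul_of_nonneg_left hL1u hα0,
      mul_le_mul_of_nonneg_left (by linarith : L2/2 ≤ 203/250) (by linarith : (0:ℝ) ≤ 1-α)]
  have : α * Htilde 1 γ₁ + (1 - α) * Htilde 2 γ₂ ≤ 203/250 := by linarith
  linarith [this]

/-! ### Lower bounds on Htilde at the optimizing points -/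

lemma htilde_one_ge :
    Real.logb 2 ((351:ℝ)/200) + Real.logb 2 ((200:ℝ)/151) * (151/351)
      ≤ Htilde 1 (151/351) := by
  set p : ℕ → ℝ := fun i => if i = 0 then (200/351 : ℝ) else 151/351 with hpdef
  have hmem : shannonEntropy 1 p ∈ { h : ℝ | ∃ q : ℕ → ℝ,
      (∀ i ∈ Finset.range (1 + 1), 0 ≤ q i) ∧
      (∑ i ∈ Finset.range (1 + 1), q i = 1) ∧
      (∑ i ∈ Finset.range (1 + 1), (i : ℝ) * q i = ((1:ℕ) : ℝ) * (151/351)) ∧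
      h = shannonEntropy 1 q } := by
    refine ⟨p, ?_, ?_, ?_, rfl⟩
    · intro i _
      simp only [hpdef]
      split <;> norm_num
    · simp [hpdef, Finset.sum_range_succ]
      norm_num
    · simp [hpdef, Finset.sum_range_succ]
  have hle := le_csSup (bddAbove_Htilde 1 (151/351)) hmem
  have hE : shannonEntropy 1 p
      = Real.logb 2 ((351:ℝ)/200) + Real.logb 2 ((200:ℝ)/151) * (151/351) := by
    unfold shannonEntropy
    rw [Finset.sum_range_succ, Finset.sum_range_succ, Finset.sum_range_zero]
    simp only [hpdef]
    norm_num
    rw [Real.logb, Real.logb, Real.logb, Real.logb,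
      Real.log_div (by norm_num) (by norm_num),
      Real.log_div (by norm_num) (by norm_num),
      Real.log_div (by norm_num) (by norm_num),
      Real.log_div (by norm_num) (by norm_num)]
    have h2 : Real.log 2 ≠ 0 := ne_of_gt (Real.log_pos one_lt_two)
    field_simp
    ring
  unfold Htilde
  rw [show (1/((1:ℕ):ℝ)) = 1 by norm_num, one_mul]
  rw [← hE]
  exact hle

lemma htilde_two_ge :
    (Real.logb 2 ((93001:ℝ)/40000)
      + Real.logb 2 ((200:ℝ)/151) * (75802/93001)) / 2
      ≤ Htilde 2 (37901/93001) := by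
  set p : ℕ → ℝ := fun i => if i = 0 then (40000/93001 : ℝ)
    else if i = 1 then 30200/93001 else 22801/93001 with hpdef
  have hmem : shannonEntropy 2 p ∈ { h : ℝ | ∃ q : ℕ → ℝ,
      (∀ i ∈ Finset.range (2 + 1), 0 ≤ q i) ∧
      (∑ i ∈ Finset.range (2 + 1), q i = 1) ∧
      (∑ i ∈ Finset.range (2 + 1), (i : ℝ) * q i = ((2:ℕ) : ℝ) * (37901/93001)) ∧
      h = shannonEntropy 2 q } := by
    refine ⟨p, ?_, ?_, ?_, rfl⟩
    · intro i _
      simp only [hpdef]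
      split
      · norm_num
      · split <;> norm_num
    · simp [hpdef, Finset.sum_range_succ]
      norm_num
    · simp [hpdef, Finset.sum_range_succ]
      norm_num
  have hle := le_csSup (bddAbove_Htilde 2 (37901/93001)) hmem
  have hE : shannonEntropy 2 p
      = Real.logb 2 ((93001:ℝ)/40000)
        + Real.logb 2 ((200:ℝ)/151) * (75802/93001) := by
    unfold shannonEntropy
    rw [Finset.sum_range_succ, Finset.sum_range_succ, Finset.sum_range_succ,
      Finset.sum_range_zero]
    simp only [hpdef]
    norm_num
    rw [Real.logb, Real.logb, Real.logb, Real.logb, Real.logb,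
      Real.log_div (by norm_num) (by norm_num),
      Real.log_div (by norm_num) (by norm_num),
      Real.log_div (by norm_num) (by norm_num),
      Real.log_div (by norm_num) (by norm_num),
      Real.log_div (by norm_num) (by norm_num),
      show (40000:ℝ) = 200^2 by norm_num,
      show (22801:ℝ) = 151^2 by norm_num,
      show (30200:ℝ) = 200*151 by norm_num,
      Real.log_pow, Real.log_pow,
      Real.log_mul (by norm_num) (by norm_num)]
    have h2 : Real.log 2 ≠ 0 := ne_of_gt (Real.log_pos one_lt_two)
    field_simp
    ring
  unfold Htilde
  rw [show (1/((2:ℕ):ℝ)) = 1/2 by norm_num]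
  rw [← hE]
  linarith

/-! ### Main theorem -/

/-- `0.811 ≤ C ≤ 0.812` (the paper reports `C = 0.8114` bits per
time slot, attained near `α = 0.177`, `γ₁ = 0.43`, `γ₂ = 0.407`). -/
theorem twoUserCapacity_bounds :
    (0.811 : ℝ) ≤ twoUserCapacity ∧ twoUserCapacity ≤ 0.812 := by
  constructor
  · -- lower bound via explicit witness
    set α : ℝ := 6036849/34123151 with hαdef
    set L1 := Real.logb 2 ((351:ℝ)/200) with hL1
    set M := Real.logb 2 ((93001:ℝ)/40000) with hM
    set lam := Real.logb 2 ((200:ℝ)/151) with hlam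
    set L2 := Real.logb 2 ((93001:ℝ)/30200) with hL2
    have hmem : α * Htilde 1 (151/351) + (1 - α) * Htilde 2 (37901/93001)
        ∈ { c : ℝ | ∃ a g₁ g₂ : ℝ,
          a ∈ Set.Icc (0 : ℝ) 1 ∧
          g₁ ∈ Set.Icc (0 : ℝ) (1 / 2) ∧
          g₂ ∈ Set.Icc (0 : ℝ) (1 / 2) ∧
          a * (g₁ + 1) + (1 - a) * (g₂ + 1 / 2) = 1 ∧
          c = a * Htilde 1 g₁ + (1 - a) * Htilde 2 g₂ } := by
      refine ⟨α, 151/351, 37901/93001, ?_, ?_, ?_, ?_, rfl⟩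
      · constructor <;> norm_num [hαdef]
      · constructor <;> norm_num
      · constructor <;> norm_num
      · norm_num [hαdef]
    have hbdd : BddAbove { c : ℝ | ∃ a g₁ g₂ : ℝ,
          a ∈ Set.Icc (0 : ℝ) 1 ∧
          g₁ ∈ Set.Icc (0 : ℝ) (1 / 2) ∧
          g₂ ∈ Set.Icc (0 : ℝ) (1 / 2) ∧
          a * (g₁ + 1) + (1 - a) * (g₂ + 1 / 2) = 1 ∧
          c = a * Htilde 1 g₁ + (1 - a) * Htilde 2 g₂ } :=
      ⟨0.812, fun c hc => cap_elem_le c hc⟩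
    have hsup := le_csSup hbdd hmem
    have hlow : (0.811 : ℝ) ≤ α * Htilde 1 (151/351) + (1 - α) * Htilde 2 (37901/93001) := by
      have hH1 : L1 + lam * (151/351) ≤ Htilde 1 (151/351) := htilde_one_ge
      have hH2 : (M + lam * (75802/93001)) / 2 ≤ Htilde 2 (37901/93001) := htilde_two_ge
      have hα0 : (0:ℝ) ≤ α := by norm_num [hαdef]
      have hα1 : (0:ℝ) ≤ 1 - α := by norm_num [hαdef]
      have hA : α * (L1 + lam * (151/351)) ≤ α * Htilde 1 (151/351) :=
        mul_le_mul_of_nonneg_left hH1 hα0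
      have hB : (1-α) * ((M + lam * (75802/93001)) / 2) ≤ (1-α) * Htilde 2 (37901/93001) :=
        mul_le_mul_of_nonneg_left hH2 hα1
      have hkey : α * (151/351) + (1-α) * (37901/93001) = (1-α)/2 := by
        norm_num [hαdef]
      have hML : M + lam = L2 := ML_eq
      have halg : α * (L1 + lam * (151/351)) + (1-α) * ((M + lam * (75802/93001)) / 2)
          = α * L1 + (1-α) * (L2/2) := by
        have h75 : (75802:ℝ)/93001 = 2 * (37901/93001) := by norm_num
        rw [h75]
        linear_combination lam * hkey + ((1-α)/2) * hML
      have hL1l : (811:ℝ)/1000 ≤ L1 := L1_ge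
      have hL2l : (811:ℝ)/500 ≤ L2 := L2_ge
      have hfin : (811:ℝ)/1000 ≤ α * L1 + (1-α) * (L2/2) := by
        nlinarith [mul_le_mul_of_nonneg_left hL1l hα0,
          mul_le_mul_of_nonneg_left (by linarith : (811:ℝ)/1000 ≤ L2/2) hα1]
      have : (811:ℝ)/1000 = 0.811 := by norm_num
      linarith
    exact hlow.trans hsup
  · exact Real.sSup_le cap_elem_le (by norm_num)
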